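/- Let X be a real normed space, Φ : X → ℝ locally Lipschitz, and Ψ : X → (−∞, ∞] convex, proper, lower semicontinuous. Suppose u ∈ X with Ψ(u) < ∞, w ∈ X*, and Φ°(u; v − u) + Ψ(v) − Ψ(u) ≥ ⟨w, v − u⟩ for all v ∈ X. Then w ∈ ∂Φ(u) + ∂Ψ(u), where ∂Φ is the Clarke generalized gradient and ∂Ψ is the convex subdifferential. -/

import Mathlib

open Filter

/-- Clarke generalized directional derivative. -/
noncomputable def clarkeDeriv {X : Type*} [NormedAddCommGroup X] [NormedSpace ℝ X]
    (Φ : X → ℝ) (u v : X) : ℝ :=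
  limsup (fun p : X × ℝ => (Φ (p.1 + p.2 • v) - Φ p.1) / p.2)
    ((nhds u) ×ˢ (nhdsWithin 0 (Set.Ioi 0)))


open Topology

section ClarkeAux
variable {X : Type*} [NormedAddCommGroup X] [NormedSpace ℝ X]
variable (Φ : X → ℝ) (u : X) {K : NNReal} {ε : ℝ}



lemma clarke_ev_bound (hε : 0 < ε) (hK : LipschitzOnWith K Φ (Metric.ball u ε)) (v : X) :
    ∀ᶠ p : X × ℝ in (𝓝 u) ×ˢ (𝓝[>] (0:ℝ)), |(Φ (p.1 + p.2 • v) - Φ p.1) / p.2| ≤ K * ‖v‖ := by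
  set δ : ℝ := ε / (2 * (‖v‖ + 1)) with hδ
  have hδpos : 0 < δ := by positivity
  have h1 : Metric.ball u (ε/2) ∈ 𝓝 u := Metric.ball_mem_nhds u (by positivity)
  have h2 : Set.Ioo (0:ℝ) δ ∈ nhdsWithin (0:ℝ) (Set.Ioi 0) :=
    Ioo_mem_nhdsGT_of_mem ⟨le_refl _, hδpos⟩
  filter_upwards [Filter.prod_mem_prod h1 h2] with p hp
  have hx := hp.1
  have ht0 := hp.2.1
  have htδ := hp.2.2
  have hxball : p.1 ∈ Metric.ball u ε := by
    refine Metric.ball_subset_ball (by linarith) hx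
  have hnorm : ‖p.2 • v‖ < ε / 2 := by
    rw [norm_smul, Real.norm_eq_abs, abs_of_pos ht0]
    calc p.2 * ‖v‖ ≤ p.2 * (‖v‖ + 1) := by nlinarith [norm_nonneg v]
      _ < δ * (‖v‖ + 1) := by nlinarith [norm_nonneg v]
      _ ≤ ε / 2 := by rw [hδ]; rw [div_mul_eq_mul_div, div_le_div_iff₀ (by positivity) (by norm_num)]; nlinarith [norm_nonneg v]
  have hx2 : p.1 + p.2 • v ∈ Metric.ball u ε := by
    have : dist (p.1 + p.2 • v) u ≤ ‖p.2 • v‖ + dist p.1 u := by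
      rw [dist_eq_norm]
      calc ‖p.1 + p.2 • v - u‖ = ‖p.2 • v + (p.1 - u)‖ := by rw [show p.1 + p.2 • v - u = p.2 • v + (p.1 - u) by abel]
        _ ≤ ‖p.2 • v‖ + ‖p.1 - u‖ := norm_add_le _ _
        _ = ‖p.2 • v‖ + dist p.1 u := by rw [dist_eq_norm]
    have hxu : dist p.1 u < ε / 2 := hx
    exact lt_of_le_of_lt this (by linarith)
  have hlip := hK.dist_le_mul _ hx2 _ hxball
  rw [Real.dist_eq, dist_eq_norm] at hlip
  have : ‖p.1 + p.2 • v - p.1‖ = p.2 * ‖v‖ := by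
    rw [add_sub_cancel_left, norm_smul, Real.norm_eq_abs, abs_of_pos ht0]
  rw [this] at hlip
  rw [abs_div, abs_of_pos ht0, div_le_iff₀ ht0]
  calc |Φ (p.1 + p.2 • v) - Φ p.1| ≤ K * (p.2 * ‖v‖) := hlip
    _ = (K : ℝ) * ‖v‖ * p.2 := by ring

end ClarkeAux

section
variable {X : Type*} [NormedAddCommGroup X] [NormedSpace ℝ X]
variable (Φ : X → ℝ) (u : X) {K : NNReal} {ε : ℝ}

/-- The difference-quotient function. -/
noncomputable def cq (Φ : X → ℝ) (v : X) : X × ℝ → ℝ := fun p => (Φ (p.1 + p.2 • v) - Φ p.1) / p.2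

lemma clarke_eq (v : X) : clarkeDeriv Φ u v = limsup (cq Φ v) ((𝓝 u) ×ˢ (𝓝[>] (0:ℝ))) := rfl

lemma cbdd_above (hε : 0 < ε) (hK : LipschitzOnWith K Φ (Metric.ball u ε)) (v : X) :
    IsBoundedUnder (· ≤ ·) ((𝓝 u) ×ˢ (𝓝[>] (0:ℝ))) (cq Φ v) :=
  ⟨(K : ℝ) * ‖v‖, eventually_map.mpr <|
    (clarke_ev_bound Φ u hε hK v).mono fun p hp => (abs_le.1 hp).2⟩

lemma cbdd_below (hε : 0 < ε) (hK : LipschitzOnWith K Φ (Metric.ball u ε)) (v : X) :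
    IsBoundedUnder (· ≥ ·) ((𝓝 u) ×ˢ (𝓝[>] (0:ℝ))) (cq Φ v) :=
  ⟨-((K : ℝ) * ‖v‖), eventually_map.mpr <|
    (clarke_ev_bound Φ u hε hK v).mono fun p hp => (abs_le.1 hp).1⟩

lemma clarke_zero : clarkeDeriv Φ u (0 : X) = 0 := by
  rw [clarke_eq]
  have : cq Φ (0 : X) = fun _ => (0:ℝ) := by
    funext p; simp [cq]
  rw [this]
  exact limsup_const 0

lemma clarke_le_bound (hε : 0 < ε) (hK : LipschitzOnWith K Φ (Metric.ball u ε)) (v : X) :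
    clarkeDeriv Φ u v ≤ (K : ℝ) * ‖v‖ := by
  rw [clarke_eq]
  refine limsup_le_of_le ((cbdd_below Φ u hε hK v).isCoboundedUnder_le) ?_
  exact (clarke_ev_bound Φ u hε hK v).mono fun p hp => (abs_le.1 hp).2

lemma clarke_subadd (hε : 0 < ε) (hK : LipschitzOnWith K Φ (Metric.ball u ε)) (v₁ v₂ : X) :
    clarkeDeriv Φ u (v₁ + v₂) ≤ clarkeDeriv Φ u v₁ + clarkeDeriv Φ u v₂ := by
  set L := (𝓝 u) ×ˢ (𝓝[>] (0:ℝ)) with hL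
  set π : X × ℝ → X × ℝ := fun p => (p.1 + p.2 • v₁, p.2) with hπ
  have hπt : Filter.Tendsto π L L := by
    refine Filter.Tendsto.prodMk ?_ tendsto_snd
    have h2 : Filter.Tendsto (fun p : X × ℝ => p.2 • v₁) L (𝓝 (0 : X)) := by
      have := ((tendsto_snd (f := 𝓝 u) (g := 𝓝[>] (0:ℝ))).mono_right
        nhdsWithin_le_nhds).smul_const v₁
      simpa using this
    have := (tendsto_fst (f := 𝓝 u) (g := 𝓝[>] (0:ℝ))).add h2
    simpa using this
  have hdecomp : cq Φ (v₁ + v₂) = cq Φ v₁ + (cq Φ v₂ ∘ π) := by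
    funext p
    simp only [cq, Pi.add_apply, Function.comp_apply, π]
    rw [← add_div]
    congr 1
    rw [smul_add]
    abel
  rw [clarke_eq, clarke_eq, clarke_eq, hdecomp]
  have hb1 := cbdd_above Φ u hε hK v₁
  have hb1' := cbdd_below Φ u hε hK v₁
  have hb2c : IsBoundedUnder (· ≤ ·) L (cq Φ v₂ ∘ π) :=
    ⟨(K : ℝ) * ‖v₂‖, eventually_map.mpr <|
      (hπt.eventually (clarke_ev_bound Φ u hε hK v₂)).mono fun p hp => (abs_le.1 hp).2⟩
  have hb2c' : IsBoundedUnder (· ≥ ·) L (cq Φ v₂ ∘ π) :=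
    ⟨-((K : ℝ) * ‖v₂‖), eventually_map.mpr <|
      (hπt.eventually (clarke_ev_bound Φ u hε hK v₂)).mono fun p hp => (abs_le.1 hp).1⟩
  refine le_trans (limsup_add_le hb1' hb1 hb2c'.isCoboundedUnder_le hb2c)
    (add_le_add_right ?_ _)
  have heq : limsup (cq Φ v₂ ∘ π) L = limsup (cq Φ v₂) (Filter.map π L) := by
    rw [Filter.limsup, Filter.limsup, Filter.map_map]
  rw [heq]
  refine limsup_le_limsup_of_le hπt ?_ (cbdd_above Φ u hε hK v₂)
  have : IsCoboundedUnder (· ≤ ·) (Filter.map π L) (cq Φ v₂) := by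
    unfold Filter.IsCoboundedUnder
    rw [Filter.map_map]
    exact hb2c'.isCoboundedUnder_le
  exact this

lemma clarke_subhomog (hε : 0 < ε) (hK : LipschitzOnWith K Φ (Metric.ball u ε))
    {c : ℝ} (hc : 0 < c) (v : X) :
    clarkeDeriv Φ u (c • v) ≤ c * clarkeDeriv Φ u v := by
  set L := (𝓝 u) ×ˢ (𝓝[>] (0:ℝ)) with hL
  set σ : X × ℝ → X × ℝ := fun p => (p.1, c * p.2) with hσ
  have hσt : Filter.Tendsto σ L L := by
    refine Filter.Tendsto.prodMk tendsto_fst ?_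
    refine tendsto_nhdsWithin_of_tendsto_nhds_of_eventually_within _ ?_ ?_
    · have : Filter.Tendsto (fun p : X × ℝ => c * p.2) L (𝓝 (c * 0)) :=
        tendsto_const_nhds.mul ((tendsto_snd).mono_right nhdsWithin_le_nhds)
      simpa using this
    · have hmem : ∀ᶠ p : X × ℝ in L, p.2 ∈ Set.Ioi (0:ℝ) :=
        (tendsto_snd (f := 𝓝 u) (g := 𝓝[>] (0:ℝ))).eventually eventually_mem_nhdsWithin
      exact hmem.mono fun p hp => mul_pos hc hp
  have hdecomp : cq Φ (c • v) = fun p => c * (cq Φ v ∘ σ) p := by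
    funext p
    simp only [cq, Function.comp_apply, σ]
    rw [smul_smul, mul_comm p.2 c, mul_div_assoc' c, mul_div_mul_left _ _ (ne_of_gt hc)]
  rw [clarke_eq, clarke_eq, hdecomp]
  set g := cq Φ v ∘ σ with hg
  have hgbu : IsBoundedUnder (· ≤ ·) L g :=
    ⟨(K : ℝ) * ‖v‖, eventually_map.mpr <|
      (hσt.eventually (clarke_ev_bound Φ u hε hK v)).mono fun p hp => (abs_le.1 hp).2⟩
  have hgbl : IsBoundedUnder (· ≥ ·) L g :=
    ⟨-((K : ℝ) * ‖v‖), eventually_map.mpr <|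
      (hσt.eventually (clarke_ev_bound Φ u hε hK v)).mono fun p hp => (abs_le.1 hp).1⟩
  have step2 : limsup g L ≤ limsup (cq Φ v) L := by
    have heq : limsup g L = limsup (cq Φ v) (Filter.map σ L) := by
      rw [Filter.limsup, Filter.limsup, Filter.map_map]
    rw [heq]
    refine limsup_le_limsup_of_le hσt ?_ (cbdd_above Φ u hε hK v)
    unfold Filter.IsCoboundedUnder
    rw [Filter.map_map]
    exact hgbl.isCoboundedUnder_le
  have step1 : limsup (fun p => c * g p) L ≤ c * limsup g L := by
    refine le_of_forall_gt_imp_ge_of_dense fun y hy => ?_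
    have hb : limsup g L < y / c := by
      rw [lt_div_iff₀ hc]; linarith [hy]
    have hev : ∀ᶠ p in L, c * g p ≤ y := by
      filter_upwards [eventually_lt_of_limsup_lt hb hgbu] with p hp
      calc c * g p ≤ c * (y / c) := by nlinarith
        _ = y := mul_div_cancel₀ y (ne_of_gt hc)
    refine limsup_le_of_le ?_ hev
    have : IsBoundedUnder (· ≥ ·) L (fun p => c * g p) :=
      ⟨c * (-((K : ℝ) * ‖v‖)), eventually_map.mpr <|
        (hσt.eventually (clarke_ev_bound Φ u hε hK v)).mono fun p hp => by
          have h2 : -((K:ℝ) * ‖v‖) ≤ cq Φ v (σ p) := (abs_le.1 hp).1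
          simp only [hg, Function.comp_apply]
          nlinarith⟩
    exact this.isCoboundedUnder_le
  calc limsup (fun p => c * g p) L ≤ c * limsup g L := step1
    _ ≤ c * limsup (cq Φ v) L := by nlinarith [step2]
end

/-- if `Φ` is locally Lipschitz, `Ψ : X → (−∞,∞]` is convex, proper and
lower semicontinuous, `Ψ(u) < ∞` and
`Φ°(u; v−u) + Ψ(v) − Ψ(u) ≥ ⟨w, v−u⟩` for all `v`, then `w ∈ ∂Φ(u) + ∂Ψ(u)`. -/
theorem ps_characterization {X : Type*} [NormedAddCommGroup X] [NormedSpace ℝ X]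
    (Φ : X → ℝ) (hΦ : LocallyLipschitz Φ)
    (Ψ : X → EReal)
    (hconv : ∀ x y : X, ∀ t : ℝ, 0 ≤ t → t ≤ 1 →
      Ψ (t • x + (1 - t) • y) ≤ (t : EReal) * Ψ x + ((1 - t : ℝ) : EReal) * Ψ y)
    (hproper : ∃ x, Ψ x ≠ ⊤) (hnobot : ∀ x, Ψ x ≠ ⊥)
    (hlsc : LowerSemicontinuous Ψ)
    (u : X) (hu : Ψ u ≠ ⊤)
    (w : X →L[ℝ] ℝ)
    (hw : ∀ v : X, Ψ u + ((w (v - u) : ℝ) : EReal)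
        ≤ ((clarkeDeriv Φ u (v - u) : ℝ) : EReal) + Ψ v) :
    ∃ ξ η : X →L[ℝ] ℝ,
      (∀ v : X, ξ v ≤ clarkeDeriv Φ u v) ∧
      (∀ v : X, Ψ u + ((η (v - u) : ℝ) : EReal) ≤ Ψ v) ∧
      w = ξ + η := by
  classical
  -- local Lipschitz data
  obtain ⟨K, s, hs, hK0⟩ := hΦ u
  obtain ⟨ε, hε, hsub⟩ := Metric.mem_nhds_iff.1 hs
  have hK : LipschitzOnWith K Φ (Metric.ball u ε) := hK0.mono hsub
  set f : X → ℝ := clarkeDeriv Φ u with hf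
  -- basic properties of f
  have hf0 : f 0 = 0 := clarke_zero Φ u
  have hfle : ∀ v, f v ≤ (K : ℝ) * ‖v‖ := fun v => clarke_le_bound Φ u hε hK v
  have hfsub : ∀ v₁ v₂, f (v₁ + v₂) ≤ f v₁ + f v₂ := fun v₁ v₂ =>
    clarke_subadd Φ u hε hK v₁ v₂
  have hfhom : ∀ c : ℝ, 0 < c → ∀ v, f (c • v) ≤ c * f v := fun c hc v =>
    clarke_subhomog Φ u hε hK hc v
  have hsuper : ∀ t : ℝ, 0 < t → ∀ z, t * f z ≤ f (t • z) := by
    intro t ht z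
    have h := hfhom t⁻¹ (inv_pos.2 ht) (t • z)
    rw [smul_smul, inv_mul_cancel₀ (ne_of_gt ht), one_smul] at h
    have h2 := mul_le_mul_of_nonneg_left h ht.le
    rwa [← mul_assoc, mul_inv_cancel₀ (ne_of_gt ht), one_mul] at h2
  -- the convex part
  set Ψu : ℝ := (Ψ u).toReal with hΨudef
  have hΨu : Ψ u = (Ψu : EReal) := (EReal.coe_toReal hu (hnobot u)).symm
  set D : Set X := {z | Ψ (u + z) ≠ ⊤} with hD
  set G : X → ℝ := fun z => (Ψ (u + z)).toReal - Ψu with hG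
  set q : X → ℝ := fun z => w z - G z with hq
  have h0D : (0 : X) ∈ D := by simp only [hD, Set.mem_setOf_eq, add_zero]; exact hu
  have hcoe : ∀ z ∈ D, Ψ (u + z) = (((Ψ (u + z)).toReal : ℝ) : EReal) := fun z hz =>
    (EReal.coe_toReal hz (hnobot _)).symm
  -- q ≤ f on D
  have hqf : ∀ z ∈ D, q z ≤ f z := by
    intro z hz
    have h := hw (u + z)
    rw [add_sub_cancel_left, hΨu, hcoe z hz] at h
    rw [← EReal.coe_add, ← EReal.coe_add, EReal.coe_le_coe_iff] at h
    simp only [hq, hG]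
    linarith
  -- convexity of D and G
  have hDconv : ∀ z₁ ∈ D, ∀ z₂ ∈ D, ∀ θ : ℝ, 0 ≤ θ → θ ≤ 1 →
      (θ • z₁ + (1 - θ) • z₂) ∈ D ∧
      G (θ • z₁ + (1 - θ) • z₂) ≤ θ * G z₁ + (1 - θ) * G z₂ := by
    intro z₁ hz₁ z₂ hz₂ θ hθ0 hθ1
    have h := hconv (u + z₁) (u + z₂) θ hθ0 hθ1
    have hpt : θ • (u + z₁) + (1 - θ) • (u + z₂) = u + (θ • z₁ + (1 - θ) • z₂) := by
      module
    rw [hpt, hcoe z₁ hz₁, hcoe z₂ hz₂, ← EReal.coe_mul, ← EReal.coe_mul,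
      ← EReal.coe_add] at h
    have hne : Ψ (u + (θ • z₁ + (1 - θ) • z₂)) ≠ ⊤ :=
      ne_top_of_le_ne_top (EReal.coe_ne_top _) h
    refine ⟨hne, ?_⟩
    have htr := EReal.toReal_le_toReal h (hnobot _) (EReal.coe_ne_top _)
    rw [EReal.toReal_coe] at htr
    simp only [hG]
    set r₁ := (Ψ (u + z₁)).toReal
    set r₂ := (Ψ (u + z₂)).toReal
    nlinarith
  -- the sandwich sublinear functional
  set S : X → Set ℝ := fun v =>
    {y | ∃ t : ℝ, 0 ≤ t ∧ ∃ z ∈ D, y = f (v + t • z) - t * q z} with hS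
  have hfvS : ∀ v, f v ∈ S v := by
    intro v
    exact ⟨0, le_refl _, 0, h0D, by simp⟩
  have hSne : ∀ v, (S v).Nonempty := fun v => ⟨f v, hfvS v⟩
  have hlb : ∀ v, ∀ y ∈ S v, -f (-v) ≤ y := by
    rintro v y ⟨t, ht, z, hz, rfl⟩
    have h1 : t * q z ≤ t * f z := mul_le_mul_of_nonneg_left (hqf z hz) ht
    have h2 : t * f z ≤ f (t • z) := by
      rcases eq_or_lt_of_le ht with h | h
      · rw [← h, zero_smul, hf0, zero_mul]
      · exact hsuper t h z
    have h3 : f (t • z) ≤ f (v + t • z) + f (-v) := by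
      have : (v + t • z) + (-v) = t • z := by abel
      calc f (t • z) = f ((v + t • z) + (-v)) := by rw [this]
        _ ≤ f (v + t • z) + f (-v) := hfsub _ _
    linarith
  have hbdd : ∀ v, BddBelow (S v) := fun v => ⟨-f (-v), fun y hy => hlb v y hy⟩
  set p : X → ℝ := fun v => sInf (S v) with hp
  have hple : ∀ v, p v ≤ f v := fun v => csInf_le (hbdd v) (hfvS v)
  have hp0 : 0 ≤ p 0 := by
    refine le_csInf (hSne 0) fun y hy => ?_
    have := hlb 0 y hy
    rwa [neg_zero, hf0, neg_zero] at this
  -- subhomogeneity (one direction)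
  have hple2 : ∀ c : ℝ, 0 < c → ∀ v, p (c • v) ≤ c * p v := by
    intro c hc v
    have key : ∀ y ∈ S v, p (c • v) ≤ c * y := by
      rintro y ⟨t, ht, z, hz, rfl⟩
      have hmem : f (c • v + (c * t) • z) - (c * t) * q z ∈ S (c • v) :=
        ⟨c * t, by positivity, z, hz, rfl⟩
      have h1 : p (c • v) ≤ f (c • v + (c * t) • z) - (c * t) * q z :=
        csInf_le (hbdd _) hmem
      have h2 : f (c • v + (c * t) • z) ≤ c * f (v + t • z) := by
        have he : c • (v + t • z) = c • v + (c * t) • z := by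
          rw [smul_add, smul_smul]
        rw [← he]
        exact hfhom c hc _
      nlinarith
    have h3 : c⁻¹ * p (c • v) ≤ p v := by
      refine le_csInf (hSne v) fun y hy => ?_
      have := key y hy
      rw [inv_mul_le_iff₀ hc]
      exact this
    have h4 := mul_le_mul_of_nonneg_left h3 hc.le
    rwa [← mul_assoc, mul_inv_cancel₀ (ne_of_gt hc), one_mul] at h4
  have phom : ∀ c : ℝ, 0 < c → ∀ v, p (c • v) = c * p v := by
    intro c hc v
    have h1 := hple2 c hc v
    have h2 := hple2 c⁻¹ (inv_pos.2 hc) (c • v)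
    rw [smul_smul, inv_mul_cancel₀ (ne_of_gt hc), one_smul] at h2
    have : c * p v ≤ p (c • v) := by
      have h4 := mul_le_mul_of_nonneg_left h2 hc.le
      rwa [← mul_assoc, mul_inv_cancel₀ (ne_of_gt hc), one_mul] at h4
    linarith
  -- subadditivity
  have padd : ∀ v₁ v₂, p (v₁ + v₂) ≤ p v₁ + p v₂ := by
    intro v₁ v₂
    have key : ∀ y₁ ∈ S v₁, ∀ y₂ ∈ S v₂, p (v₁ + v₂) ≤ y₁ + y₂ := by
      rintro y₁ ⟨t₁, ht₁, z₁, hz₁, rfl⟩ y₂ ⟨t₂, ht₂, z₂, hz₂, rfl⟩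
      by_cases htz : t₁ + t₂ = 0
      · have ht₁0 : t₁ = 0 := by linarith
        have ht₂0 : t₂ = 0 := by linarith
        subst ht₁0; subst ht₂0
        simp only [zero_smul, add_zero, zero_mul, sub_zero]
        exact (hple _).trans (hfsub v₁ v₂)
      · have htpos : 0 < t₁ + t₂ := lt_of_le_of_ne (by linarith) (Ne.symm htz)
        set t : ℝ := t₁ + t₂ with htdef
        set θ : ℝ := t₁ / t with hθdef
        have hθ0 : 0 ≤ θ := div_nonneg ht₁ htpos.le
        have hθ1 : θ ≤ 1 := by
          rw [hθdef, div_le_one htpos]; linarith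
        set z : X := θ • z₁ + (1 - θ) • z₂ with hzdef
        obtain ⟨hzD, hGz⟩ := hDconv z₁ hz₁ z₂ hz₂ θ hθ0 hθ1
        have e1 : t * θ = t₁ := by
          rw [hθdef]; field_simp
        have e2 : t * (1 - θ) = t₂ := by
          rw [hθdef]; field_simp; ring
        have hqz : θ * q z₁ + (1 - θ) * q z₂ ≤ q z := by
          have hwz : w z = θ * w z₁ + (1 - θ) * w z₂ := by
            simp only [hzdef, map_add, map_smul, smul_eq_mul]
          simp only [hq, hwz]
          nlinarith [hGz]
        have hmem : f ((v₁ + v₂) + t • z) - t * q z ∈ S (v₁ + v₂) :=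
          ⟨t, htpos.le, z, hzD, rfl⟩
        have hpt : (v₁ + v₂) + t • z = (v₁ + t₁ • z₁) + (v₂ + t₂ • z₂) := by
          have htz' : t • z = t₁ • z₁ + t₂ • z₂ := by
            rw [hzdef, smul_add, smul_smul, smul_smul, e1, e2]
          rw [htz']; abel
        have hfle' : f ((v₁ + v₂) + t • z) ≤ f (v₁ + t₁ • z₁) + f (v₂ + t₂ • z₂) := by
          rw [hpt]; exact hfsub _ _
        have hqmul : t₁ * q z₁ + t₂ * q z₂ ≤ t * q z := by
          have hm := mul_le_mul_of_nonneg_left hqz htpos.le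
          have he : t * (θ * q z₁ + (1 - θ) * q z₂) = t₁ * q z₁ + t₂ * q z₂ := by
            rw [mul_add, ← mul_assoc, ← mul_assoc, e1, e2]
          linarith
        calc p (v₁ + v₂) ≤ f ((v₁ + v₂) + t • z) - t * q z := csInf_le (hbdd _) hmem
          _ ≤ (f (v₁ + t₁ • z₁) - t₁ * q z₁) + (f (v₂ + t₂ • z₂) - t₂ * q z₂) := by
              linarith
    have step1 : ∀ y₁ ∈ S v₁, p (v₁ + v₂) - y₁ ≤ p v₂ := by
      intro y₁ h₁
      refine le_csInf (hSne v₂) fun y₂ h₂ => ?_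
      linarith [key y₁ h₁ y₂ h₂]
    have step2 : p (v₁ + v₂) - p v₂ ≤ p v₁ := by
      refine le_csInf (hSne v₁) fun y₁ h₁ => ?_
      linarith [step1 y₁ h₁]
    linarith
  -- minorization by q
  have hqp : ∀ z ∈ D, p (-z) ≤ -q z := by
    intro z hz
    have hmem : f (-z + (1:ℝ) • z) - 1 * q z ∈ S (-z) := ⟨1, zero_le_one, z, hz, rfl⟩
    have := csInf_le (hbdd _) hmem
    rwa [one_smul, neg_add_cancel, hf0, one_mul, zero_sub] at this
  -- Hahn-Banach
  set pm : X →ₗ.[ℝ] ℝ := ⟨⊥, 0⟩ with hpm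
  have hpmle : ∀ x : pm.domain, pm x ≤ p x := by
    intro x
    have hx : (x : X) = 0 := (Submodule.mem_bot ℝ).1 x.2
    have : pm x = 0 := rfl
    rw [this, hx]
    exact hp0
  obtain ⟨g, -, hg⟩ := exists_extension_of_le_sublinear pm p phom padd hpmle
  have hgf : ∀ v, g v ≤ f v := fun v => (hg v).trans (hple v)
  have hgb : ∀ v, ‖g v‖ ≤ (K : ℝ) * ‖v‖ := by
    intro v
    rw [Real.norm_eq_abs, abs_le]
    constructor
    · have h1 : g (-v) ≤ f (-v) := hgf (-v)
      rw [map_neg] at h1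
      have h2 : f (-v) ≤ (K : ℝ) * ‖v‖ := by
        have := hfle (-v); rwa [norm_neg] at this
      linarith
    · exact (hgf v).trans (hfle v)
  set ξ : X →L[ℝ] ℝ := LinearMap.mkContinuous g (K : ℝ) hgb with hξ
  have hξapp : ∀ v, ξ v = g v := fun v => rfl
  refine ⟨ξ, w - ξ, ?_, ?_, ?_⟩
  · intro v
    rw [hξapp]
    exact hgf v
  · intro v
    by_cases hv : Ψ v = ⊤
    · rw [hv]; exact le_top
    · have hzD : v - u ∈ D := by
        simp only [hD, Set.mem_setOf_eq, add_sub_cancel]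
        exact hv
      have h1 : g (-(v - u)) ≤ p (-(v - u)) := hg _
      have h2 : p (-(v - u)) ≤ -q (v - u) := hqp _ hzD
      rw [map_neg] at h1
      have h3 : w (v - u) - g (v - u) ≤ G (v - u) := by
        simp only [hq] at h1 h2 ⊢
        linarith
      have happ : ((w - ξ) (v - u) : ℝ) = w (v - u) - g (v - u) := by
        rw [ContinuousLinearMap.sub_apply, hξapp]
      rw [happ, hΨu, ← EReal.coe_add]
      have hΨv : Ψ v = (((Ψ v).toReal : ℝ) : EReal) := (EReal.coe_toReal hv (hnobot v)).symm
      rw [hΨv, EReal.coe_le_coe_iff]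
      have hGval : G (v - u) = (Ψ v).toReal - Ψu := by
        simp only [hG, add_sub_cancel]
      linarith [h3, hGval.symm.le, hGval.le]
  · ext v
    simp [hξapp]
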